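/- For any integer k, the domination ratio γ̄(ℤ, {1, 3k+2}) equals 1/3. -/

import Mathlib

open Filter

open scoped Classical in
noncomputable def lowerDensity (U : Set ℤ) : ℝ :=
  Filter.liminf (fun n : ℕ =>
    (((Finset.Icc (-(n:ℤ)) (n:ℤ)).filter (fun m => m ∈ U)).card : ℝ) / (2*(n:ℝ)+1))
    Filter.atTop

/-- `D` is a dominating set of the Cayley digraph `Γ(ℤ, S)`. -/
def IsDominating (S D : Set ℤ) : Prop :=
  ∀ v : ℤ, v ∈ D ∨ ∃ u ∈ D, ∃ s ∈ S, v = u + s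

/-- The domination ratio of `Γ(ℤ, S)`. -/
noncomputable def domRatio (S : Set ℤ) : ℝ :=
  sInf {x : ℝ | ∃ D : Set ℤ, IsDominating S D ∧ x = lowerDensity D}

lemma tendsto_lin_aux (a b : ℝ) :
    Tendsto (fun n : ℕ => (a*(n:ℝ)+b)/(2*(n:ℝ)+1)) atTop (nhds (a/2)) := by
  have h0 : Tendsto (fun n : ℕ => (1:ℝ)/(n:ℝ)) atTop (nhds 0) :=
    tendsto_one_div_atTop_nhds_zero_nat
  have hnum : Tendsto (fun n : ℕ => a + b*(1/(n:ℝ))) atTop (nhds (a + b*0)) :=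
    tendsto_const_nhds.add (h0.const_mul b)
  have hden : Tendsto (fun n : ℕ => 2 + (1/(n:ℝ))) atTop (nhds (2 + 0)) :=
    tendsto_const_nhds.add h0
  have := hnum.div hden (by norm_num)
  have h2 : (a + b*0)/(2+0) = a/2 := by ring
  rw [h2] at this
  refine this.congr' ?_
  filter_upwards [eventually_ge_atTop 1] with n hn
  have hn' : (n:ℝ) ≠ 0 := by positivity
  simp only [Pi.div_apply]
  field_simp

lemma count_mul3_aux (n : ℕ) [DecidablePred (fun m : ℤ => m ∈ {m : ℤ | 3 ∣ m})] :
    (((Finset.Icc (-(n:ℤ)) (n:ℤ)).filter (fun m => m ∈ {m : ℤ | 3 ∣ m})).card : ℤ)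
      = 2*((n:ℤ)/3)+1 := by
  have himg : ((Finset.Icc (-(n:ℤ)) (n:ℤ)).filter (fun m => m ∈ {m : ℤ | 3 ∣ m}))
      = (Finset.Icc (-((n:ℤ)/3)) ((n:ℤ)/3)).image (fun j => 3*j) := by
    ext m
    simp only [Finset.mem_filter, Finset.mem_Icc, Finset.mem_image, Set.mem_setOf_eq]
    constructor
    · rintro ⟨⟨h1, h2⟩, c, rfl⟩
      exact ⟨c, by omega, by ring⟩
    · rintro ⟨j, hj, rfl⟩
      refine ⟨by omega, by omega⟩
  rw [himg, Finset.card_image_of_injective _ (fun a b h => by omega), Int.card_Icc]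
  have hn : (0:ℤ) ≤ (n:ℤ)/3 := by positivity
  omega

lemma density_mul3_aux [DecidablePred (fun m : ℤ => m ∈ {m : ℤ | 3 ∣ m})] :
    Tendsto (fun n : ℕ =>
      (((Finset.Icc (-(n:ℤ)) (n:ℤ)).filter (fun m => m ∈ {m : ℤ | 3 ∣ m})).card : ℝ) / (2*(n:ℝ)+1))
      atTop (nhds (1/3)) := by
  have hlo := tendsto_lin_aux (2/3) (-1/3)
  have hhi := tendsto_lin_aux (2/3) 1
  norm_num at hlo hhi
  refine tendsto_of_tendsto_of_tendsto_of_le_of_le hlo hhi ?_ ?_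
  · intro n
    have hc := count_mul3_aux n
    have hq2 : (n:ℤ) ≤ 3 * ((n:ℤ)/3) + 2 := by omega
    have hcard : (((Finset.Icc (-(n:ℤ)) (n:ℤ)).filter (fun m => m ∈ {m : ℤ | 3 ∣ m})).card : ℝ)
        = 2*(((n:ℤ)/3 : ℤ) : ℝ)+1 := by exact_mod_cast congrArg (fun z : ℤ => (z:ℝ)) hc
    have hd : (0:ℝ) < 2*(n:ℝ)+1 := by positivity
    simp only []
    rw [hcard]
    apply div_le_div_of_nonneg_right ?_ hd.le
    have : ((n:ℤ):ℝ) ≤ 3*(((n:ℤ)/3 : ℤ):ℝ) + 2 := by exact_mod_cast hq2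
    push_cast at this ⊢
    linarith
  · intro n
    have hc := count_mul3_aux n
    have hq1 : 3 * ((n:ℤ)/3) ≤ (n:ℤ) := by omega
    have hcard : (((Finset.Icc (-(n:ℤ)) (n:ℤ)).filter (fun m => m ∈ {m : ℤ | 3 ∣ m})).card : ℝ)
        = 2*(((n:ℤ)/3 : ℤ) : ℝ)+1 := by exact_mod_cast congrArg (fun z : ℤ => (z:ℝ)) hc
    have hd : (0:ℝ) < 2*(n:ℝ)+1 := by positivity
    simp only []
    rw [hcard]
    apply div_le_div_of_nonneg_right ?_ hd.le
    have : 3*(((n:ℤ)/3 : ℤ):ℝ) ≤ ((n:ℤ):ℝ) := by exact_mod_cast hq1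
    push_cast at this ⊢
    linarith

lemma density_lb_aux (k : ℤ) (D : Set ℤ) [DecidablePred (fun m : ℤ => m ∈ D)]
    (hD : IsDominating {1, 3*k+2} D) :
    (1/3 : ℝ) ≤ Filter.liminf (fun n : ℕ =>
      (((Finset.Icc (-(n:ℤ)) (n:ℤ)).filter (fun m => m ∈ D)).card : ℝ) / (2*(n:ℝ)+1))
      Filter.atTop := by
  set f := fun n : ℕ =>
      (((Finset.Icc (-(n:ℤ)) (n:ℤ)).filter (fun m => m ∈ D)).card : ℝ) / (2*(n:ℝ)+1) with hf
  set M : ℕ := 3 * k.natAbs + 3 with hM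
  have key : ∀ n : ℕ, M ≤ n →
      (2*((n:ℤ) - M) + 1 : ℤ) ≤
        3 * (((Finset.Icc (-(n:ℤ)) (n:ℤ)).filter (fun m => m ∈ D)).card : ℤ) := by
    intro n hn
    set T := (Finset.Icc (-(n:ℤ)) (n:ℤ)).filter (fun m => m ∈ D) with hT
    set m : ℤ := (n:ℤ) - M with hm
    have hsub : Finset.Icc (-m) m ⊆
        (T ∪ T.image (· + 1)) ∪ T.image (· + (3*k+2)) := by
      intro v hv
      rw [Finset.mem_Icc] at hv
      rcases hD v with hvD | ⟨u, huD, s, hs, rfl⟩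
      · refine Finset.mem_union_left _ (Finset.mem_union_left _ ?_)
        rw [hT, Finset.mem_filter, Finset.mem_Icc]
        exact ⟨⟨by omega, by omega⟩, hvD⟩
      · rcases hs with rfl | rfl
        · refine Finset.mem_union_left _ (Finset.mem_union_right _ ?_)
          refine Finset.mem_image.2 ⟨u, ?_, rfl⟩
          rw [hT, Finset.mem_filter, Finset.mem_Icc]
          exact ⟨⟨by omega, by omega⟩, huD⟩
        · refine Finset.mem_union_right _ ?_
          refine Finset.mem_image.2 ⟨u, ?_, rfl⟩
          rw [hT, Finset.mem_filter, Finset.mem_Icc]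
          refine ⟨⟨by omega, by omega⟩, huD⟩
    have hcard := Finset.card_le_card hsub
    have h1 : ((T ∪ T.image (· + 1)) ∪ T.image (· + (3*k+2))).card ≤ 3 * T.card := by
      calc ((T ∪ T.image (· + 1)) ∪ T.image (· + (3*k+2))).card
          ≤ (T ∪ T.image (· + 1)).card + (T.image (· + (3*k+2))).card :=
            Finset.card_union_le _ _
        _ ≤ (T.card + (T.image (· + 1)).card) + (T.image (· + (3*k+2))).card :=
            Nat.add_le_add_right (Finset.card_union_le _ _) _
        _ ≤ (T.card + T.card) + T.card :=
            Nat.add_le_add (Nat.add_le_add_left (Finset.card_image_le) _)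
              (Finset.card_image_le)
        _ = 3 * T.card := by ring
    have h2 : (Finset.Icc (-m) m).card = (2*m+1).toNat := by
      rw [Int.card_Icc]; congr 1; ring
    have hm0 : 0 ≤ m := by omega
    have := le_trans hcard h1
    rw [h2] at this
    omega
  set c : ℝ := (1 - 2*(M:ℝ))/3 with hc
  have hlow : Tendsto (fun n : ℕ => ((2/3)*(n:ℝ) + c)/(2*(n:ℝ)+1)) atTop (nhds (1/3)) := by
    have := tendsto_lin_aux (2/3) c
    norm_num at this
    exact this
  have hle : (fun n : ℕ => ((2/3)*(n:ℝ) + c)/(2*(n:ℝ)+1)) ≤ᶠ[atTop] f := by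
    filter_upwards [eventually_ge_atTop M] with n hn
    have hk := key n hn
    have hkR : (2*((n:ℝ) - M) + 1) ≤ 3 * (((Finset.Icc (-(n:ℤ)) (n:ℤ)).filter
        (fun m => m ∈ D)).card : ℝ) := by exact_mod_cast hk
    have hd : (0:ℝ) < 2*(n:ℝ)+1 := by positivity
    rw [hf]
    apply div_le_div_of_nonneg_right ?_ hd.le
    rw [hc]
    linarith
  have hbdd : atTop.IsBoundedUnder (· ≥ ·) f := by
    refine isBoundedUnder_of ⟨0, fun n => ?_⟩
    rw [hf]
    positivity
  have hcob : atTop.IsCoboundedUnder (· ≥ ·) f := by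
    refine IsBoundedUnder.isCoboundedUnder_ge (isBoundedUnder_of ⟨1, fun n => ?_⟩)
    rw [hf]
    have hd : (0:ℝ) < 2*(n:ℝ)+1 := by positivity
    rw [div_le_one hd]
    have h1 : ((Finset.Icc (-(n:ℤ)) (n:ℤ)).filter (fun m => m ∈ D)).card
        ≤ (Finset.Icc (-(n:ℤ)) (n:ℤ)).card := Finset.card_filter_le _ _
    have h2 : (Finset.Icc (-(n:ℤ)) (n:ℤ)).card = 2*n+1 := by
      rw [Int.card_Icc]; omega
    have : (((Finset.Icc (-(n:ℤ)) (n:ℤ)).filter (fun m => m ∈ D)).card : ℝ)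
        ≤ ((2*n+1 : ℕ) : ℝ) := by exact_mod_cast h2 ▸ h1
    refine this.trans ?_
    push_cast
    linarith
  have := liminf_le_liminf hle hlow.isBoundedUnder_ge hcob
  rwa [hlow.liminf_eq] at this

theorem stmt_15 (k : ℤ) : domRatio {1, 3*k + 2} = 1/3 := by
  have hdom : IsDominating {1, 3*k+2} {m : ℤ | 3 ∣ m} := by
    intro v
    rcases (show v % 3 = 0 ∨ v % 3 = 1 ∨ v % 3 = 2 by omega) with h | h | h
    · exact Or.inl (show (3:ℤ) ∣ v by omega)
    · refine Or.inr ⟨v - 1, show (3:ℤ) ∣ v - 1 by omega, 1, Set.mem_insert _ _, by ring⟩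
    · refine Or.inr ⟨v - (3*k+2), show (3:ℤ) ∣ v - (3*k+2) by omega, 3*k+2,
        Set.mem_insert_of_mem _ rfl, by ring⟩
  have hval : lowerDensity {m : ℤ | 3 ∣ m} = 1/3 := by
    unfold lowerDensity
    exact (@density_mul3_aux (fun a => Classical.propDecidable _)).liminf_eq
  have hmem : (1/3 : ℝ) ∈
      {x : ℝ | ∃ D : Set ℤ, IsDominating {1, 3*k+2} D ∧ x = lowerDensity D} :=
    ⟨_, hdom, hval.symm⟩
  have hlb : ∀ x ∈ {x : ℝ | ∃ D : Set ℤ, IsDominating {1, 3*k+2} D ∧ x = lowerDensity D},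
      (1/3 : ℝ) ≤ x := by
    rintro x ⟨D, hDdom, rfl⟩
    unfold lowerDensity
    exact @density_lb_aux k D (fun a => Classical.propDecidable _) hDdom
  unfold domRatio
  exact le_antisymm (csInf_le ⟨1/3, hlb⟩ hmem) (le_csInf ⟨_, hmem⟩ hlb)
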